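/- arXiv:2007.01400 — 2 statements merged into one kernel-verified Lean document; each statement's English description precedes it below -/
import Mathlib

section
/- Let 0 ≤ α < n, 1 < p < n/α and 1/q = 1/p − α/n. Let A be an invertible n×n real matrix and let w be a weight. If w ∈ 𝒜_{A,p,q}, then w(Ax) ≤ [w]_{𝒜_{A,p,q}} w(x) for almost every x ∈ ℝ^n. -/
open MeasureTheory Set ENNReal

namespace Paper

/-- An axis-parallel (half-open) cube in `ℝⁿ`. -/
structure Cube (n : ℕ) where
  corner : Fin n → ℝ
  side : ℝ
  side_pos : 0 < side

namespace Cube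

variable {n : ℕ}

/-- The underlying set of a cube. -/
def set (Q : Cube n) : Set (Fin n → ℝ) :=
  {x | ∀ i, Q.corner i ≤ x i ∧ x i < Q.corner i + Q.side}

/-- The volume `|Q| = side ^ n` of a cube. -/
noncomputable def vol (Q : Cube n) : ℝ := Q.side ^ n

/-- The concentric dilate `λQ` of a cube (same center, side multiplied by `l > 0`). -/
noncomputable def dilate (Q : Cube n) (l : ℝ) (hl : 0 < l) : Cube n :=
  ⟨fun i => Q.corner i + Q.side / 2 - l * Q.side / 2, l * Q.side, mul_pos hl Q.side_pos⟩

/-- The concentric triple `3Q` of a cube. -/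
noncomputable def tri (Q : Cube n) : Cube n :=
  ⟨fun i => Q.corner i - Q.side, 3 * Q.side, by have := Q.side_pos; linarith⟩

end Cube

variable {n : ℕ}

/-- The conjugate exponent `p' = p/(p-1)`. -/
noncomputable def conj (p : ℝ) : ℝ := p / (p - 1)

/-- The Euclidean length of a vector of `Fin n → ℝ`. -/
noncomputable def elen (x : Fin n → ℝ) : ℝ := Real.sqrt (∑ i, x i ^ 2)

/-- The (extended-real valued) weighted norm `‖f‖_{L^p(u)} = (∫ |f|^p u)^{1/p}`. -/
noncomputable def lpNorm (p : ℝ) (u f : (Fin n → ℝ) → ℝ) : ℝ≥0∞ :=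
  (∫⁻ x, ENNReal.ofReal (|f x| ^ p * u x)) ^ (1 / p)

/-- Membership `f ∈ L^p(u)` for a weight `u`. -/
def MemLpW (p : ℝ) (u f : (Fin n → ℝ) → ℝ) : Prop :=
  Measurable f ∧ lpNorm p u f < ⊤

/-- The fractional maximal operator
`M_α f(x) = sup_{Q ∋ x} |Q|^{α/n-1} ∫_Q |f|`. -/
noncomputable def frMax (α : ℝ) (f : (Fin n → ℝ) → ℝ) (x : Fin n → ℝ) : ℝ≥0∞ :=
  ⨆ Q : {Q : Cube n // x ∈ Q.set},
    ENNReal.ofReal (Q.1.vol ^ (α / n - 1)) * ∫⁻ y in Q.1.set, ENNReal.ofReal |f y|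

/-- The maximal operator `M_{α,s} f(x) = sup_{Q ∋ x} |Q|^{α/n} ((1/|Q|)∫_Q |f|^s)^{1/s}`. -/
noncomputable def frMaxS (α s : ℝ) (f : (Fin n → ℝ) → ℝ) (x : Fin n → ℝ) : ℝ≥0∞ :=
  ⨆ Q : {Q : Cube n // x ∈ Q.set},
    ENNReal.ofReal (Q.1.vol ^ (α / n)) *
      ((ENNReal.ofReal Q.1.vol)⁻¹ * ∫⁻ y in Q.1.set, ENNReal.ofReal (|f y| ^ s)) ^ (1 / s)

/-- The quantity whose supremum over all cubes is `[w]_{𝒜_{A,p,q}}`; for `p = 1`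
the second factor is `‖w⁻¹‖_{L^∞(Q)}`. -/
noncomputable def apqE (A : Matrix (Fin n) (Fin n) ℝ) (p q : ℝ)
    (w : (Fin n → ℝ) → ℝ) (Q : Cube n) : ℝ≥0∞ :=
  ((ENNReal.ofReal Q.vol)⁻¹ * ∫⁻ x in Q.set, ENNReal.ofReal (w (A.mulVec x)) ^ q) ^ (1 / q) *
    (if p = 1 then essSup (fun x => (ENNReal.ofReal (w x))⁻¹) (volume.restrict Q.set)
     else ((ENNReal.ofReal Q.vol)⁻¹ *
        ∫⁻ x in Q.set, ENNReal.ofReal (w x) ^ (-conj p)) ^ (1 / conj p))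

/-- The constant `[w]_{𝒜_{A,p,q}}`. -/
noncomputable def apqConst (A : Matrix (Fin n) (Fin n) ℝ) (p q : ℝ)
    (w : (Fin n → ℝ) → ℝ) : ℝ≥0∞ :=
  ⨆ Q : Cube n, apqE A p q w Q

/-- Membership in the class `𝒜_{A,p,q}`. -/
def MemApq (A : Matrix (Fin n) (Fin n) ℝ) (p q : ℝ) (w : (Fin n → ℝ) → ℝ) : Prop :=
  apqConst A p q w < ⊤

/-- The quantity whose supremum over all cubes is `[w]_{𝒜_{A,p}}`; for `p = 1` the
second factor is `‖w⁻¹‖_{L^∞(Q)}`. -/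
noncomputable def apE (A : Matrix (Fin n) (Fin n) ℝ) (p : ℝ)
    (w : (Fin n → ℝ) → ℝ) (Q : Cube n) : ℝ≥0∞ :=
  ((ENNReal.ofReal Q.vol)⁻¹ * ∫⁻ x in Q.set, ENNReal.ofReal (w (A.mulVec x))) *
    (if p = 1 then essSup (fun x => (ENNReal.ofReal (w x))⁻¹) (volume.restrict Q.set)
     else ((ENNReal.ofReal Q.vol)⁻¹ *
        ∫⁻ x in Q.set, ENNReal.ofReal (w x) ^ (1 - conj p)) ^ (p - 1))

/-- The constant `[w]_{𝒜_{A,p}}`. -/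
noncomputable def apConst (A : Matrix (Fin n) (Fin n) ℝ) (p : ℝ)
    (w : (Fin n → ℝ) → ℝ) : ℝ≥0∞ :=
  ⨆ Q : Cube n, apE A p w Q

/-- Membership in the class `𝒜_{A,p}`. -/
def MemAp (A : Matrix (Fin n) (Fin n) ℝ) (p : ℝ) (w : (Fin n → ℝ) → ℝ) : Prop :=
  apConst A p w < ⊤

/-- The quantity `v(Q)^{-1/p} (∫_Q M_α(χ_Q v)^q u)^{1/q}` whose supremum over all
cubes is the Sawyer testing constant `[u,v]_{ℳ_{α,p,q}}`. -/
noncomputable def sawyerE (α p q : ℝ) (u v : (Fin n → ℝ) → ℝ) (Q : Cube n) : ℝ≥0∞ :=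
  ((∫⁻ x in Q.set, ENNReal.ofReal (v x)) ^ (1 / p))⁻¹ *
    (∫⁻ x in Q.set, (frMax α (Q.set.indicator v) x) ^ q * ENNReal.ofReal (u x)) ^ (1 / q)

/-- The Sawyer testing constant `[u,v]_{ℳ_{α,p,q}}`. -/
noncomputable def sawyerConst (α p q : ℝ) (u v : (Fin n → ℝ) → ℝ) : ℝ≥0∞ :=
  ⨆ Q : Cube n, sawyerE α p q u v Q

/-- Membership of a pair of weights in the Sawyer class `ℳ_{α,p,q}`. -/
def MemSawyer (α p q : ℝ) (u v : (Fin n → ℝ) → ℝ) : Prop :=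
  sawyerConst α p q u v < ⊤

/-- The averaged norm `‖g‖_{r,|x|∼t}` over the annulus `t < |x| ≤ 2t`
(essential supremum when `r = ∞`). -/
noncomputable def annNorm (r : ℝ≥0∞) (g : (Fin n → ℝ) → ℝ) (t : ℝ) : ℝ≥0∞ :=
  if r = ⊤ then
    essSup (fun x => ENNReal.ofReal |g x|)
      (volume.restrict {x | t < elen x ∧ elen x ≤ 2 * t})
  else
    ((volume {x : Fin n → ℝ | elen x < 2 * t})⁻¹ *
      ∫⁻ x in {x | t < elen x ∧ elen x ≤ 2 * t}, ENNReal.ofReal (|g x| ^ r.toReal)) ^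
        (1 / r.toReal)

/-- The fractional size condition `K ∈ S_{β,r}`. -/
def SizeCond (β : ℝ) (r : ℝ≥0∞) (K : (Fin n → ℝ) → ℝ) : Prop :=
  ∃ C : ℝ, 0 < C ∧ ∀ t : ℝ, 0 < t →
    annNorm r K t ≤ ENNReal.ofReal (C * t ^ (β - n))

/-- The generalized fractional Hörmander condition `K ∈ H_{β,r}`. -/
def HormCond (β : ℝ) (r : ℝ≥0∞) (K : (Fin n → ℝ) → ℝ) : Prop :=
  ∃ c : ℝ, 1 < c ∧ ∃ C : ℝ, 0 < C ∧ ∀ x : Fin n → ℝ, ∀ R : ℝ, c * elen x < R →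
    (∑' m : ℕ, ENNReal.ofReal (((2 : ℝ) ^ (m + 1) * R) ^ ((n : ℝ) - β)) *
      annNorm r (fun y => K (y - x) - K y) (2 ^ (m + 1) * R)) ≤ ENNReal.ofReal C

/-- The integral operator `T_{α,m} f(x) = ∫ k_1(x-A_1y) ⋯ k_m(x-A_my) f(y) dy`. -/
noncomputable def intOp (m : ℕ) (k : Fin m → (Fin n → ℝ) → ℝ)
    (A : Fin m → Matrix (Fin n) (Fin n) ℝ) (f : (Fin n → ℝ) → ℝ) (x : Fin n → ℝ) : ℝ :=
  ∫ y, (∏ i, k i (x - (A i).mulVec y)) * f y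

/-- Hypothesis (H): the matrices `A i` and `A i - A j` (`i ≠ j`) are invertible. -/
def HypH (m : ℕ) (A : Fin m → Matrix (Fin n) (Fin n) ℝ) : Prop :=
  (∀ i, (A i).det ≠ 0) ∧ ∀ i j, i ≠ j → (A i - A j).det ≠ 0

/-- `T` is of strong type `(p,p)` (with respect to Lebesgue measure). -/
def StrongType (p : ℝ) (T : ((Fin n → ℝ) → ℝ) → (Fin n → ℝ) → ℝ) : Prop :=
  ∃ C : ℝ, 0 < C ∧ ∀ f : (Fin n → ℝ) → ℝ, Measurable f →
    lpNorm p (fun _ => 1) (T f) ≤ ENNReal.ofReal C * lpNorm p (fun _ => 1) f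

/-- Bounded, measurable and compactly supported functions. -/
def BddCompactSupp (f : (Fin n → ℝ) → ℝ) : Prop :=
  Measurable f ∧ (∃ M : ℝ, ∀ x, |f x| ≤ M) ∧ HasCompactSupport f

/-- A dyadic lattice: any two cubes are nested or disjoint, every cube is the union of
its children (the cubes of the family of half its side length contained in it), and
every cube has a parent of twice its side length. -/
def IsDyadicLattice (𝒟 : Set (Cube n)) : Prop :=
  (∀ Q ∈ 𝒟, ∀ Q' ∈ 𝒟, Q.set ⊆ Q'.set ∨ Q'.set ⊆ Q.set ∨ Disjoint Q.set Q'.set) ∧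
  (∀ Q ∈ 𝒟, (⋃ P ∈ {P | P ∈ 𝒟 ∧ P.side = Q.side / 2 ∧ P.set ⊆ Q.set}, P.set) = Q.set) ∧
  (∀ Q ∈ 𝒟, ∃ Q' ∈ 𝒟, Q'.side = 2 * Q.side ∧ Q.set ⊆ Q'.set)

/-- An `η`-sparse family of cubes. -/
def IsSparse (η : ℝ) (𝒮 : Set (Cube n)) : Prop :=
  ∃ E : Cube n → Set (Fin n → ℝ),
    (∀ Q ∈ 𝒮, E Q ⊆ Q.set ∧ MeasurableSet (E Q) ∧ ENNReal.ofReal (η * Q.vol) ≤ volume (E Q)) ∧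
    𝒮.PairwiseDisjoint E

/-- The sparse operator `𝒜_{α,s,𝒮} f(x) = Σ_{Q ∈ 𝒮} |Q|^{α/n} (avg_Q |f|^s)^{1/s} χ_Q(x)`. -/
noncomputable def sparseOp (α s : ℝ) (𝒮 : Set (Cube n)) (f : (Fin n → ℝ) → ℝ)
    (x : Fin n → ℝ) : ℝ≥0∞ :=
  ∑' Q : 𝒮, Set.indicator (Q : Cube n).set
    (fun _ => ENNReal.ofReal ((Q : Cube n).vol ^ (α / n)) *
      ((ENNReal.ofReal (Q : Cube n).vol)⁻¹ *
        ∫⁻ y in (Q : Cube n).set, ENNReal.ofReal (|f y| ^ s)) ^ (1 / s)) x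

/-- The quantity whose sup over `R ∈ 𝒟` is the outer testing constant `𝒯_{A,r,out,𝒟}`. -/
noncomputable def testOutE (α p q r : ℝ) (𝒟 : Set (Cube n))
    (A : Matrix (Fin n) (Fin n) ℝ) (u v : (Fin n → ℝ) → ℝ) (R : Cube n) : ℝ≥0∞ :=
  ((∫⁻ x in R.set, ENNReal.ofReal (v x)) ^ (1 / p))⁻¹ *
    (∫⁻ x, (∑' Q : {Q : Cube n // Q ∈ 𝒟 ∧ R.set ⊆ Q.set},
        Set.indicator Q.1.set (fun _ =>
          ENNReal.ofReal (Q.1.vol ^ (α / n - 1 / r)) *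
            (∫⁻ y in Q.1.set, ENNReal.ofReal (R.set.indicator v y)) ^ (1 / r)) x) ^ q *
      ENNReal.ofReal (u (A.mulVec x))) ^ (1 / q)

/-- The quantity whose sup over `R ∈ 𝒟` is the dual outer testing constant `𝒯*_{A,r,out,𝒟}`. -/
noncomputable def testOutStarE (α p q r : ℝ) (𝒟 : Set (Cube n))
    (A : Matrix (Fin n) (Fin n) ℝ) (u v : (Fin n → ℝ) → ℝ) (R : Cube n) : ℝ≥0∞ :=
  ((∫⁻ x in R.set, ENNReal.ofReal (u (A.mulVec x))) ^ (1 / conj q))⁻¹ *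
    (∫⁻ x, (∑' Q : {Q : Cube n // Q ∈ 𝒟 ∧ R.set ⊆ Q.set},
        Set.indicator Q.1.set (fun _ =>
          ENNReal.ofReal (Q.1.vol ^ (α / n - 1 / r)) *
            (∫⁻ y in Q.1.set, ENNReal.ofReal (v y)) ^ (1 / r - 1) *
            (∫⁻ y in Q.1.set, ENNReal.ofReal (R.set.indicator
              (fun z => u (A.mulVec z)) y))) x) ^ conj p *
      ENNReal.ofReal (v x)) ^ (1 / conj p)

/-- The outer testing constant `𝒯_{A,r,out,𝒟}`. -/
noncomputable def testOutConst (α p q r : ℝ) (𝒟 : Set (Cube n))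
    (A : Matrix (Fin n) (Fin n) ℝ) (u v : (Fin n → ℝ) → ℝ) : ℝ≥0∞ :=
  ⨆ R : 𝒟, testOutE α p q r 𝒟 A u v R

/-- The dual outer testing constant `𝒯*_{A,r,out,𝒟}`. -/
noncomputable def testOutStarConst (α p q r : ℝ) (𝒟 : Set (Cube n))
    (A : Matrix (Fin n) (Fin n) ℝ) (u v : (Fin n → ℝ) → ℝ) : ℝ≥0∞ :=
  ⨆ R : 𝒟, testOutStarE α p q r 𝒟 A u v R

/-- The grand maximal truncated operator `M_T` (for `m = 2`). -/
noncomputable def grandMax (T : ((Fin n → ℝ) → ℝ) → (Fin n → ℝ) → ℝ)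
    (A1 A2 : Matrix (Fin n) (Fin n) ℝ) (f : (Fin n → ℝ) → ℝ) (x : Fin n → ℝ) : ℝ≥0∞ :=
  ⨆ P : {P : Cube n × Cube n // A1⁻¹.mulVec x ∈ P.1.set ∧ A2⁻¹.mulVec x ∈ P.2.set},
    essSup (fun ξ => ENNReal.ofReal
        |T (Set.indicator ((P.1.1.tri.set ∪ P.1.2.tri.set)ᶜ) f) ξ|)
      (volume.restrict (P.1.1.set ∪ P.1.2.set))

/-- The local grand maximal truncated operator `M_{T,Q₀¹∪Q₀²}` (for `m = 2`). -/
noncomputable def locGrandMax (T : ((Fin n → ℝ) → ℝ) → (Fin n → ℝ) → ℝ)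
    (A1 A2 : Matrix (Fin n) (Fin n) ℝ) (Q01 Q02 : Cube n)
    (f : (Fin n → ℝ) → ℝ) (x : Fin n → ℝ) : ℝ≥0∞ :=
  ⨆ P : {P : Cube n × Cube n // (A1⁻¹.mulVec x ∈ P.1.set ∧ Q01.set ⊆ P.1.set) ∧
      (A2⁻¹.mulVec x ∈ P.2.set ∧ Q02.set ⊆ P.2.set)},
    essSup (fun ξ => ENNReal.ofReal
        |T (Set.indicator ((Q01.tri.set ∪ Q02.tri.set) \ (P.1.1.tri.set ∪ P.1.2.tri.set)) f) ξ|)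
      (volume.restrict (P.1.1.set ∪ P.1.2.set))


open Filter Metric Topology in
lemma ennreal_iSup_min_rpow (a : ℝ≥0∞) {s : ℝ} (hs : 0 < s) :
    ⨆ k : ℕ, (a ⊓ (k : ℝ≥0∞)) ^ s = a ^ s := by
  apply le_antisymm
  · exact iSup_le fun k => ENNReal.rpow_le_rpow inf_le_left hs.le
  · rcases eq_or_ne a ⊤ with rfl | ha
    · rw [ENNReal.top_rpow_of_pos hs, top_le_iff, iSup_eq_top]
      intro b hb
      obtain ⟨k, hk⟩ := ENNReal.exists_nat_gt
        (ENNReal.rpow_lt_top_of_nonneg (y := 1/s) (by positivity) hb.ne).ne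
      refine ⟨k, ?_⟩
      have h2 : (b ^ (1 / s)) ^ s < ((⊤ : ℝ≥0∞) ⊓ (k : ℝ≥0∞)) ^ s := by
        rw [top_inf_eq]
        exact ENNReal.rpow_lt_rpow hk hs
      rwa [← ENNReal.rpow_mul, one_div_mul_cancel hs.ne', ENNReal.rpow_one] at h2
    · obtain ⟨k, hk⟩ := ENNReal.exists_nat_gt ha
      calc a ^ s = (a ⊓ (k : ℝ≥0∞)) ^ s := by rw [inf_eq_left.2 hk.le]
        _ ≤ _ := le_iSup (fun k : ℕ => (a ⊓ (k : ℝ≥0∞)) ^ s) k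

lemma trunc_removal {a d C : ℝ≥0∞} {s : ℝ} (hs : 0 < s)
    (h : ∀ k : ℕ, (a ⊓ (k : ℝ≥0∞)) ^ s * d ≤ C) : a ^ s * d ≤ C := by
  rw [← ennreal_iSup_min_rpow a hs, ENNReal.iSup_mul]
  exact iSup_le h

open Filter Metric Topology in
lemma ae_tendsto_trunc {n : ℕ} (f : (Fin n → ℝ) → ℝ≥0∞) (hf : AEMeasurable f volume) :
    ∀ᵐ x : Fin n → ℝ, ∀ k m : ℕ,
      Tendsto (fun r => (∫⁻ y in closedBall x r,
          (ball (0 : Fin n → ℝ) m).indicator (fun y => f y ⊓ (k : ℝ≥0∞)) y) /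
          volume (closedBall x r))
        (𝓝[>] (0:ℝ)) (𝓝 ((ball (0 : Fin n → ℝ) m).indicator (fun y => f y ⊓ (k : ℝ≥0∞)) x)) := by
  rw [ae_all_iff]; intro k; rw [ae_all_iff]; intro m
  have hmeas : AEMeasurable ((ball (0 : Fin n → ℝ) m).indicator
      (fun y => f y ⊓ (k : ℝ≥0∞))) volume :=
    (hf.inf aemeasurable_const).indicator measurableSet_ball
  have hfin : (∫⁻ y, (ball (0 : Fin n → ℝ) m).indicator (fun y => f y ⊓ (k : ℝ≥0∞)) y) ≠ ⊤ := by
    rw [lintegral_indicator measurableSet_ball]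
    have h1 : (∫⁻ y in ball (0 : Fin n → ℝ) m, (f y ⊓ (k : ℝ≥0∞))) ≤
        ∫⁻ _ in ball (0 : Fin n → ℝ) m, (k : ℝ≥0∞) := lintegral_mono fun y => inf_le_right
    refine (h1.trans_lt ?_).ne
    rw [setLIntegral_const]
    exact ENNReal.mul_lt_top (ENNReal.natCast_lt_top k) measure_ball_lt_top
  filter_upwards [(Besicovitch.vitaliFamily (volume : Measure (Fin n → ℝ))).ae_tendsto_lintegral_div
    hmeas hfin] with x hx
  exact hx.comp (Besicovitch.tendsto_filterAt volume x)

open Filter Metric Topology in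
lemma cube_ae_eq_closedBall {n : ℕ} (x : Fin n → ℝ) {r : ℝ} (hr : 0 < r) :
    (⟨fun i => x i - r, 2 * r, by linarith⟩ : Cube n).set =ᵐ[volume] closedBall x r := by
  set Q : Cube n := ⟨fun i => x i - r, 2 * r, by linarith⟩ with hQdef
  have hsub : Q.set ⊆ closedBall x r := by
    intro y hy
    rw [mem_closedBall, dist_pi_le_iff hr.le]
    intro i
    have h1 : x i - r ≤ y i := (hy i).1
    have h2 : y i < x i - r + 2 * r := (hy i).2
    rw [Real.dist_eq, abs_le]
    exact ⟨by linarith, by linarith⟩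
  have hsub2 : closedBall x r \ Q.set ⊆ ⋃ i, {y : Fin n → ℝ | y i = x i + r} := by
    rintro y ⟨hy1, hy2⟩
    rw [mem_closedBall, dist_pi_le_iff hr.le] at hy1
    simp only [Cube.set, mem_setOf_eq, not_forall] at hy2
    obtain ⟨i, hi⟩ := hy2
    have hi' : ¬(x i - r ≤ y i ∧ y i < x i - r + 2 * r) := hi
    have h1 := hy1 i
    rw [Real.dist_eq, abs_le] at h1
    refine mem_iUnion.2 ⟨i, ?_⟩
    simp only [mem_setOf_eq]
    push_neg at hi'
    have h3 : x i - r + 2 * r ≤ y i := hi' (by linarith [h1.1])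
    linarith [h1.2]
  rw [MeasureTheory.ae_eq_set]
  constructor
  · rw [Set.diff_eq_empty.mpr hsub, measure_empty]
  · refine measure_mono_null hsub2 (measure_iUnion_null fun i => ?_)
    rw [MeasureTheory.volume_pi]
    exact MeasureTheory.Measure.pi_hyperplane _ i _

/-- If `w ∈ 𝒜_{A,p,q}` then `w(Ax) ≤ [w]_{𝒜_{A,p,q}} w(x)` a.e. -/
theorem apq_implies_wA_le (n : ℕ) (hn : 0 < n) (α p q : ℝ)
    (hα : 0 ≤ α) (hαn : α < n) (hp : 1 < p) (hpα : α = 0 ∨ p < (n : ℝ) / α)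
    (hq : 1 / q = 1 / p - α / (n : ℝ))
    (A : Matrix (Fin n) (Fin n) ℝ) (hA : A.det ≠ 0)
    (w : (Fin n → ℝ) → ℝ) (hw : ∀ x, 0 ≤ w x) (hwl : LocallyIntegrable w volume)
    (hmem : MemApq A p q w) :
    ∀ᵐ x ∂(volume : Measure (Fin n → ℝ)),
      ENNReal.ofReal (w (A.mulVec x)) ≤ apqConst A p q w * ENNReal.ofReal (w x) := by
  classical
  have hn0 : (0:ℝ) < n := by exact_mod_cast hn
  have hq0' : (0:ℝ) < 1 / q := by
    rw [hq]
    rcases hpα with h0 | hlt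
    · rw [h0]; simp only [zero_div, sub_zero]; positivity
    · rcases hα.lt_or_eq with hα0 | hα0
      · have hpn : p * α < n := (lt_div_iff₀ hα0).1 hlt
        rw [sub_pos, div_lt_div_iff₀ hn0 (by linarith)]
        nlinarith
      · exfalso
        rw [← hα0, _root_.div_zero] at hlt
        linarith
  have hqpos : (0:ℝ) < q := one_div_pos.1 hq0'
  have hqne : q ≠ 0 := hqpos.ne'
  have hcj : (0:ℝ) < conj p := div_pos (by linarith) (by linarith)
  have h1cj : (0:ℝ) < 1 / conj p := by positivity
  set C := apqConst A p q w with hCdef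
  have hw' : AEMeasurable w volume := hwl.aestronglyMeasurable.aemeasurable
  have hfun : (fun y : Fin n → ℝ => A.mulVec y) = ⇑(Matrix.toLin' A) := by
    funext y; rw [Matrix.toLin'_apply]
  have hcont : Continuous (fun y : Fin n → ℝ => A.mulVec y) := by
    rw [hfun]; exact (Matrix.toLin' A).continuous_of_finiteDimensional
  have hwA : AEMeasurable (fun y : Fin n → ℝ => w (A.mulVec y)) volume := by
    have hmap : Measure.map (fun y : Fin n → ℝ => A.mulVec y) volume
        = ENNReal.ofReal |(A.det)⁻¹| • volume := by
      rw [hfun]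
      exact Real.map_matrix_volume_pi_eq_smul_volume_pi hA
    have h1 : AEMeasurable w (Measure.map (fun y : Fin n → ℝ => A.mulVec y) volume) := by
      rw [hmap]; exact hw'.smul_measure _
    exact h1.comp_measurable hcont.measurable
  have hf1 : AEMeasurable (fun y : Fin n → ℝ => ENNReal.ofReal (w (A.mulVec y)) ^ q) volume :=
    ((ENNReal.continuous_rpow_const (y := q)).measurable.comp
      ENNReal.measurable_ofReal).comp_aemeasurable hwA
  have hf2 : AEMeasurable (fun y : Fin n → ℝ => ENNReal.ofReal (w y) ^ (-conj p)) volume :=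
    ((ENNReal.continuous_rpow_const (y := -conj p)).measurable.comp
      ENNReal.measurable_ofReal).comp_aemeasurable hw'
  have key : ∀ (x : Fin n → ℝ) (r : ℝ), 0 < r →
      ((∫⁻ y in Metric.closedBall x r, ENNReal.ofReal (w (A.mulVec y)) ^ q) /
          volume (Metric.closedBall x r)) ^ (1/q) *
        ((∫⁻ y in Metric.closedBall x r, ENNReal.ofReal (w y) ^ (-conj p)) /
          volume (Metric.closedBall x r)) ^ (1/conj p) ≤ C := by
    intro x r hr
    set Q : Cube n := ⟨fun i => x i - r, 2 * r, by linarith⟩ with hQdef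
    have hae : Q.set =ᵐ[volume] Metric.closedBall x r := cube_ae_eq_closedBall x hr
    have hvol : ENNReal.ofReal Q.vol = volume (Metric.closedBall x r) := by
      rw [Real.volume_pi_closedBall x hr.le]
      simp only [Cube.vol, hQdef, Fintype.card_fin]
    have hQC : apqE A p q w Q ≤ C := le_iSup (apqE A p q w) Q
    rw [apqE, if_neg hp.ne'] at hQC
    refine le_trans (le_of_eq ?_) hQC
    have e1 : (∫⁻ y in Metric.closedBall x r, ENNReal.ofReal (w (A.mulVec y)) ^ q) /
        volume (Metric.closedBall x r)
        = (ENNReal.ofReal Q.vol)⁻¹ * ∫⁻ y in Q.set, ENNReal.ofReal (w (A.mulVec y)) ^ q := by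
      rw [setLIntegral_congr hae, hvol, div_eq_mul_inv, mul_comm]
    have e2 : (∫⁻ y in Metric.closedBall x r, ENNReal.ofReal (w y) ^ (-conj p)) /
        volume (Metric.closedBall x r)
        = (ENNReal.ofReal Q.vol)⁻¹ * ∫⁻ y in Q.set, ENNReal.ofReal (w y) ^ (-conj p) := by
      rw [setLIntegral_congr hae, hvol, div_eq_mul_inv, mul_comm]
    rw [e1, e2]
  filter_upwards [ae_tendsto_trunc (fun y => ENNReal.ofReal (w (A.mulVec y)) ^ q) hf1,
    ae_tendsto_trunc (fun y => ENNReal.ofReal (w y) ^ (-conj p)) hf2] with x hx1 hx2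
  obtain ⟨m, hm⟩ := exists_nat_gt (dist x (0 : Fin n → ℝ))
  have hxm : x ∈ Metric.ball (0 : Fin n → ℝ) m := Metric.mem_ball.2 hm
  have hmain : ∀ k1 k2 : ℕ,
      (ENNReal.ofReal (w (A.mulVec x)) ^ q ⊓ (k1:ℝ≥0∞)) ^ (1/q) *
      (ENNReal.ofReal (w x) ^ (-conj p) ⊓ (k2:ℝ≥0∞)) ^ (1/conj p) ≤ C := by
    intro k1 k2
    have ht1 := hx1 k1 m
    have ht2 := hx2 k2 m
    rw [Set.indicator_of_mem hxm] at ht1 ht2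
    have hne1 : (ENNReal.ofReal (w (A.mulVec x)) ^ q ⊓ (k1:ℝ≥0∞)) ^ (1/q) ≠ ⊤ :=
      (ENNReal.rpow_lt_top_of_nonneg hq0'.le
        (inf_le_right.trans_lt (ENNReal.natCast_lt_top k1)).ne).ne
    have hne2 : (ENNReal.ofReal (w x) ^ (-conj p) ⊓ (k2:ℝ≥0∞)) ^ (1/conj p) ≠ ⊤ :=
      (ENNReal.rpow_lt_top_of_nonneg h1cj.le
        (inf_le_right.trans_lt (ENNReal.natCast_lt_top k2)).ne).ne
    have htend := ENNReal.Tendsto.mul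
      (((ENNReal.continuous_rpow_const (y := 1/q)).tendsto _).comp ht1) (Or.inr hne2)
      (((ENNReal.continuous_rpow_const (y := 1/conj p)).tendsto _).comp ht2) (Or.inr hne1)
    refine le_of_tendsto htend ?_
    filter_upwards [self_mem_nhdsWithin] with r hr
    have hrpos : (0:ℝ) < r := hr
    simp only [Function.comp_apply]
    refine le_trans (mul_le_mul' ?_ ?_) (key x r hrpos)
    · refine ENNReal.rpow_le_rpow (ENNReal.div_le_div_right ?_ _) hq0'.le
      exact lintegral_mono fun y =>
        (Set.indicator_le_self' (fun _ _ => zero_le) y).trans inf_le_left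
    · refine ENNReal.rpow_le_rpow (ENNReal.div_le_div_right ?_ _) h1cj.le
      exact lintegral_mono fun y =>
        (Set.indicator_le_self' (fun _ _ => zero_le) y).trans inf_le_left
  have step1 : ∀ k1 : ℕ, (ENNReal.ofReal (w (A.mulVec x)) ^ q ⊓ (k1:ℝ≥0∞)) ^ (1/q) *
      (ENNReal.ofReal (w x) ^ (-conj p)) ^ (1/conj p) ≤ C := by
    intro k1
    rw [mul_comm]
    refine trunc_removal h1cj fun k2 => ?_
    rw [mul_comm]
    exact hmain k1 k2
  have hfinal : (ENNReal.ofReal (w (A.mulVec x)) ^ q) ^ (1/q) *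
      (ENNReal.ofReal (w x) ^ (-conj p)) ^ (1/conj p) ≤ C := trunc_removal hq0' step1
  have hm1 : -conj p * (1 / conj p) = -1 := by field_simp
  rw [← ENNReal.rpow_mul, ← ENNReal.rpow_mul, mul_one_div_cancel hqne, hm1,
    ENNReal.rpow_one, ENNReal.rpow_neg_one] at hfinal
  rcases eq_or_ne (ENNReal.ofReal (w x)) 0 with h0 | h0
  · rw [h0, ENNReal.inv_zero] at hfinal
    rcases eq_or_ne (ENNReal.ofReal (w (A.mulVec x))) 0 with ha | ha
    · rw [ha]; exact zero_le
    · rw [ENNReal.mul_top ha] at hfinal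
      exact absurd (top_le_iff.1 hfinal) hmem.ne
  · rw [← div_eq_mul_inv] at hfinal
    exact (ENNReal.div_le_iff_le_mul (Or.inl h0) (Or.inl ENNReal.ofReal_ne_top)).1 hfinal


end Paper
end

section
/- Let A be an invertible n×n real matrix and 1 < p < ∞. If w_0 ∈ 𝒜_{A,1} and w_1 ∈ 𝒜_{A^{−1},1}, then the weight w := w_0 w_1^{1−p} belongs to 𝒜_{A,p}. -/
open MeasureTheory Set ENNReal

namespace Paper

variable {n : ℕ}

section Auxiliary

variable {n : ℕ}

lemma cube_set_eq (Q : Cube n) :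
    Q.set = Set.univ.pi (fun i => Set.Ico (Q.corner i) (Q.corner i + Q.side)) := by
  ext x; simp [Cube.set, Set.mem_univ_pi, Set.mem_Ico]

lemma cube_meas (Q : Cube n) : MeasurableSet Q.set := by
  rw [cube_set_eq]; exact MeasurableSet.univ_pi fun i => measurableSet_Ico

lemma cube_vol_pos (Q : Cube n) : 0 < Q.vol := pow_pos Q.side_pos n

lemma cube_volume (Q : Cube n) : volume Q.set = ENNReal.ofReal Q.vol := by
  rw [cube_set_eq, volume_pi_pi]
  simp only [Real.volume_Ico, add_sub_cancel_left]
  rw [Finset.prod_const, Cube.vol, ← ENNReal.ofReal_pow Q.side_pos.le]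
  simp

lemma mulVec_continuous (A : Matrix (Fin n) (Fin n) ℝ) : Continuous (A.mulVec) := by
  have : A.mulVec = fun v => Matrix.toLin' A v := by
    funext v; simp [Matrix.toLin'_apply]
  rw [this]
  exact LinearMap.continuous_of_finiteDimensional _

lemma mulVec_measurable (A : Matrix (Fin n) (Fin n) ℝ) : Measurable (A.mulVec) :=
  (mulVec_continuous A).measurable

lemma map_mulVec {A : Matrix (Fin n) (Fin n) ℝ} (hA : A.det ≠ 0) :
    (volume : Measure (Fin n → ℝ)).map A.mulVec = ENNReal.ofReal |A.det⁻¹| • volume := by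
  have : A.mulVec = fun v => Matrix.toLin' A v := by
    funext v; simp [Matrix.toLin'_apply]
  rw [this]
  exact Real.map_matrix_volume_pi_eq_smul_volume_pi hA

lemma qmp_mulVec {A : Matrix (Fin n) (Fin n) ℝ} (hA : A.det ≠ 0) :
    Measure.QuasiMeasurePreserving A.mulVec (volume : Measure (Fin n → ℝ)) volume := by
  refine ⟨mulVec_measurable A, ?_⟩
  rw [map_mulVec hA]
  exact Measure.AbsolutelyContinuous.mk fun s _ hs => by simp [hs]

lemma det_inv_ne_zero {A : Matrix (Fin n) (Fin n) ℝ} (hA : A.det ≠ 0) : A⁻¹.det ≠ 0 := by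
  rw [Matrix.det_nonsing_inv, Ring.inverse_eq_inv']
  exact inv_ne_zero hA

lemma rpow_anti {x y : ℝ≥0∞} (h : x ≤ y) {z : ℝ} (hz : z ≤ 0) : y ^ z ≤ x ^ z := by
  have e : ∀ w : ℝ≥0∞, w ^ z = (w⁻¹) ^ (-z) := by
    intro w; rw [ENNReal.inv_rpow, ENNReal.rpow_neg, inv_inv]
  rw [e x, e y]
  exact ENNReal.rpow_le_rpow (ENNReal.inv_le_inv.mpr h) (neg_nonneg.mpr hz)

lemma pl1 {e : ℝ} (he : e < 0) {a b : ℝ} (ha : 0 ≤ a) {β : ℝ≥0∞}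
    (hb : β ≤ ENNReal.ofReal b) :
    ENNReal.ofReal (a * b ^ e) ≤ ENNReal.ofReal a * β ^ e := by
  rcases lt_or_ge 0 b with hb0 | hb0
  · calc ENNReal.ofReal (a * b ^ e) = ENNReal.ofReal a * ENNReal.ofReal (b ^ e) :=
        ENNReal.ofReal_mul ha
    _ = ENNReal.ofReal a * (ENNReal.ofReal b) ^ e := by
        rw [ENNReal.ofReal_rpow_of_pos hb0]
    _ ≤ ENNReal.ofReal a * β ^ e := mul_le_mul_right (rpow_anti hb he.le) _
  · have hβ : β = 0 := le_antisymm (by simpa [ENNReal.ofReal_eq_zero.mpr hb0] using hb) (zero_le)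
    subst hβ
    rw [ENNReal.zero_rpow_of_neg he]
    by_cases ha0 : a = 0
    · simp [ha0]
    · rw [ENNReal.mul_top (by simpa [ENNReal.ofReal_eq_zero] using lt_of_le_of_ne ha (Ne.symm ha0))]
      exact le_top

lemma pl2 {e f : ℝ} (hf : f < 0) (hef : e * f = 1) {a b : ℝ} (ha : 0 ≤ a)
    (hb : 0 < b) {S : ℝ≥0∞} (hS : (ENNReal.ofReal a)⁻¹ ≤ S) :
    (ENNReal.ofReal (a * b ^ e)) ^ f ≤ S ^ (-f) * ENNReal.ofReal b := by
  by_cases ha0 : a = 0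
  · have hStop : S = ⊤ := by
      rw [ha0] at hS; simpa using hS
    rw [hStop, ENNReal.top_rpow_of_pos (by linarith),
      ENNReal.top_mul (by simpa [ENNReal.ofReal_eq_zero] using hb)]
    exact le_top
  · rw [ENNReal.ofReal_mul ha,
      ENNReal.mul_rpow_of_ne_top ENNReal.ofReal_ne_top ENNReal.ofReal_ne_top]
    have h1 : (ENNReal.ofReal (b ^ e)) ^ f = ENNReal.ofReal b := by
      rw [← ENNReal.ofReal_rpow_of_pos hb, ← ENNReal.rpow_mul, hef, ENNReal.rpow_one]
    rw [h1]
    refine mul_le_mul_left ?_ _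
    calc (ENNReal.ofReal a) ^ f = ((ENNReal.ofReal a)⁻¹) ^ (-f) := by
          rw [ENNReal.inv_rpow, ENNReal.rpow_neg, inv_inv]
    _ ≤ S ^ (-f) := ENNReal.rpow_le_rpow hS (by linarith)

/-- A cube containing the image of `Q` under `A`. -/
noncomputable def coverCube (A : Matrix (Fin n) (Fin n) ℝ) (Q : Cube n) : Cube n :=
  ⟨fun i => A.mulVec Q.corner i - ((∑ i, ∑ j, |A i j|) + 1) * Q.side,
    2 * ((∑ i, ∑ j, |A i j|) + 1) * Q.side,
    by
      have h : (0:ℝ) ≤ ∑ i, ∑ j, |A i j| :=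
        Finset.sum_nonneg fun i _ => Finset.sum_nonneg fun j _ => abs_nonneg _
      have := Q.side_pos
      positivity⟩

lemma coverCube_vol (A : Matrix (Fin n) (Fin n) ℝ) (Q : Cube n) :
    (coverCube A Q).vol = (2 * ((∑ i, ∑ j, |A i j|) + 1)) ^ n * Q.vol := by
  simp only [Cube.vol, coverCube, mul_pow]

lemma mem_coverCube {A : Matrix (Fin n) (Fin n) ℝ} {Q : Cube n} {x : Fin n → ℝ}
    (hx : x ∈ Q.set) : A.mulVec x ∈ (coverCube A Q).set := by
  set S : ℝ := ∑ i, ∑ j, |A i j| with hSdef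
  have hS : (0:ℝ) ≤ S :=
    Finset.sum_nonneg fun i _ => Finset.sum_nonneg fun j _ => abs_nonneg _
  have hs := Q.side_pos
  intro i
  have hkey : |A.mulVec x i - A.mulVec Q.corner i| ≤ S * Q.side := by
    have h1 : A.mulVec x i - A.mulVec Q.corner i = ∑ j, A i j * (x j - Q.corner j) := by
      simp [Matrix.mulVec, dotProduct, mul_sub, Finset.sum_sub_distrib]
    rw [h1]
    calc |∑ j, A i j * (x j - Q.corner j)| ≤ ∑ j, |A i j * (x j - Q.corner j)| :=
          Finset.abs_sum_le_sum_abs _ _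
    _ ≤ ∑ j, |A i j| * Q.side := by
        refine Finset.sum_le_sum fun j _ => ?_
        rw [abs_mul]
        refine mul_le_mul_of_nonneg_left ?_ (abs_nonneg _)
        have h2 := (hx j).1
        have h3 := (hx j).2
        rw [abs_le]; constructor <;> linarith
    _ = (∑ j, |A i j|) * Q.side := by rw [Finset.sum_mul]
    _ ≤ S * Q.side := by
        refine mul_le_mul_of_nonneg_right ?_ hs.le
        exact Finset.single_le_sum (f := fun i => ∑ j, |A i j|)
          (fun i _ => Finset.sum_nonneg fun j _ => abs_nonneg _) (Finset.mem_univ i)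
  obtain ⟨hk1, hk2⟩ := abs_le.mp hkey
  constructor
  · show A.mulVec Q.corner i - (S + 1) * Q.side ≤ _
    nlinarith
  · show _ < A.mulVec Q.corner i - (S + 1) * Q.side + 2 * (S + 1) * Q.side
    nlinarith

lemma key_cov {A : Matrix (Fin n) (Fin n) ℝ} (hA : A.det ≠ 0)
    {f : (Fin n → ℝ) → ℝ≥0∞} (hf : AEMeasurable f volume) {Q Q' : Cube n}
    (hsub : ∀ x ∈ Q.set, A.mulVec x ∈ Q'.set) :
    ENNReal.ofReal |A.det| * ∫⁻ y in Q.set, f y ≤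
      ∫⁻ x in Q'.set, f (A⁻¹.mulVec x) := by
  have hA' : A⁻¹.det ≠ 0 := det_inv_ne_zero hA
  have hTT : ∀ x : Fin n → ℝ, A.mulVec (A⁻¹.mulVec x) = x := fun x => by
    rw [Matrix.mulVec_mulVec, Matrix.mul_nonsing_inv _ (isUnit_iff_ne_zero.mpr hA),
      Matrix.one_mulVec]
  have hpre : (A⁻¹.mulVec) ⁻¹' Q.set ⊆ Q'.set := by
    intro x hx
    have := hsub _ hx
    rwa [hTT] at this
  have hmeas : MeasurableSet ((A⁻¹.mulVec) ⁻¹' Q.set) :=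
    (cube_meas Q).preimage (mulVec_measurable A⁻¹)
  have habs : |A⁻¹.det⁻¹| = |A.det| := by
    rw [Matrix.det_nonsing_inv, Ring.inverse_eq_inv', inv_inv]
  calc ENNReal.ofReal |A.det| * ∫⁻ y in Q.set, f y
      = ENNReal.ofReal |A⁻¹.det⁻¹| * ∫⁻ y, Q.set.indicator f y := by
        rw [habs, lintegral_indicator (cube_meas Q) f]
  _ = ∫⁻ y, Q.set.indicator f y ∂((volume : Measure (Fin n → ℝ)).map A⁻¹.mulVec) := by
        rw [map_mulVec hA', lintegral_smul_measure, smul_eq_mul]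
  _ = ∫⁻ x, Q.set.indicator f (A⁻¹.mulVec x) := by
        refine lintegral_map' ?_ (mulVec_measurable A⁻¹).aemeasurable
        rw [map_mulVec hA']
        exact (hf.indicator (cube_meas Q)).smul_measure _
  _ = ∫⁻ x in (A⁻¹.mulVec) ⁻¹' Q.set, f (A⁻¹.mulVec x) := by
        trans ∫⁻ x, ((A⁻¹.mulVec) ⁻¹' Q.set).indicator (fun x => f (A⁻¹.mulVec x)) x
        · exact lintegral_congr fun x => by
            by_cases h : A⁻¹.mulVec x ∈ Q.set <;> simp [Set.indicator, h]
        · exact lintegral_indicator hmeas _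
  _ ≤ ∫⁻ x in Q'.set, f (A⁻¹.mulVec x) := lintegral_mono_set hpre

lemma zero_prop {A : Matrix (Fin n) (Fin n) ℝ} (hA : A.det ≠ 0)
    {w1 : (Fin n → ℝ) → ℝ} (hw1 : ∀ x, 0 ≤ w1 x) (hw1m : AEMeasurable w1 volume)
    (hC : apConst A⁻¹ 1 w1 < ⊤) (Q : Cube n)
    (hQ : ¬ (∀ᵐ x ∂(volume.restrict Q.set), w1 x ≠ 0)) :
    ∀ᵐ x ∂(volume : Measure (Fin n → ℝ)), A.mulVec x ∈ Q.set → w1 x = 0 := by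
  have hA' : A⁻¹.det ≠ 0 := det_inv_ne_zero hA
  set S := essSup (fun x => (ENNReal.ofReal (w1 x))⁻¹) (volume.restrict Q.set) with hSdef
  have hS : S = ⊤ := by
    by_contra hS
    apply hQ
    filter_upwards [ae_le_essSup (μ := volume.restrict Q.set)
      (fun x => (ENNReal.ofReal (w1 x))⁻¹)] with x hx
    intro h0
    rw [h0] at hx
    simp only [ENNReal.ofReal_zero, ENNReal.inv_zero, top_le_iff] at hx
    exact hS hx
  have E : ((ENNReal.ofReal Q.vol)⁻¹ *
      ∫⁻ x in Q.set, ENNReal.ofReal (w1 (A⁻¹.mulVec x))) * S ≤ apConst A⁻¹ 1 w1 := by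
    have h := le_iSup (apE A⁻¹ 1 w1) Q
    simpa [apE, hSdef] using (show apE A⁻¹ 1 w1 Q ≤ apConst A⁻¹ 1 w1 from h)
  have hI : (∫⁻ x in Q.set, ENNReal.ofReal (w1 (A⁻¹.mulVec x))) = 0 := by
    by_contra hne
    have hV : ((ENNReal.ofReal Q.vol)⁻¹ : ℝ≥0∞) ≠ 0 :=
      ENNReal.inv_ne_zero.mpr ENNReal.ofReal_ne_top
    rw [hS, ENNReal.mul_top (mul_ne_zero hV hne)] at E
    exact hC.ne (top_le_iff.mp E)
  have hmq : AEMeasurable (fun x => ENNReal.ofReal (w1 (A⁻¹.mulVec x)))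
      (volume.restrict Q.set) :=
    (ENNReal.measurable_ofReal.comp_aemeasurable
      (hw1m.comp_quasiMeasurePreserving (qmp_mulVec hA'))).restrict
  have h1 : ∀ᵐ x ∂volume.restrict Q.set, ENNReal.ofReal (w1 (A⁻¹.mulVec x)) = 0 :=
    (lintegral_eq_zero_iff' hmq).mp hI
  have h2 : ∀ᵐ x ∂(volume : Measure (Fin n → ℝ)), x ∈ Q.set → w1 (A⁻¹.mulVec x) = 0 := by
    filter_upwards [(ae_restrict_iff' (cube_meas Q)).mp h1] with x hx hxQ
    exact le_antisymm (ENNReal.ofReal_eq_zero.mp (hx hxQ)) (hw1 _)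
  filter_upwards [(qmp_mulVec hA).ae h2] with x hx hmem
  have h3 := hx hmem
  rwa [Matrix.mulVec_mulVec, Matrix.nonsing_inv_mul _ (isUnit_iff_ne_zero.mpr hA),
    Matrix.one_mulVec] at h3

end Auxiliary
/-- If `w₀ ∈ 𝒜_{A,1}` and `w₁ ∈ 𝒜_{A⁻¹,1}` then
`w = w₀ w₁^{1-p} ∈ 𝒜_{A,p}`. -/
theorem memAp_factorization (n : ℕ) (hn : 0 < n) (p : ℝ) (hp : 1 < p)
    (A : Matrix (Fin n) (Fin n) ℝ) (hA : A.det ≠ 0)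
    (w0 w1 : (Fin n → ℝ) → ℝ)
    (hw0 : ∀ x, 0 ≤ w0 x) (hw0l : LocallyIntegrable w0 volume)
    (hw1 : ∀ x, 0 ≤ w1 x) (hw1l : LocallyIntegrable w1 volume)
    (hmem0 : MemAp A 1 w0) (hmem1 : MemAp A⁻¹ 1 w1) :
    MemAp A p (fun x => w0 x * w1 x ^ (1 - p)) := by
  classical
  have hp1 : (0:ℝ) < p - 1 := by linarith
  have hpne : p ≠ 1 := ne_of_gt hp
  have he : (1:ℝ) - p < 0 := by linarith
  have hq1 : (1:ℝ) < conj p := by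
    rw [conj, lt_div_iff₀ hp1]; linarith
  have hf : 1 - conj p < 0 := by linarith
  have hef : (1 - p) * (1 - conj p) = 1 := by
    rw [conj]; field_simp; ring
  have hqp : (conj p - 1) * (p - 1) = 1 := by
    rw [conj]; field_simp; ring
  have hnegf : -(1 - conj p) = conj p - 1 := by ring
  set w : (Fin n → ℝ) → ℝ := fun x => w0 x * w1 x ^ (1 - p) with hwdef
  have hw0m : AEMeasurable w0 (volume : Measure (Fin n → ℝ)) :=
    hw0l.aestronglyMeasurable.aemeasurable
  have hw1m : AEMeasurable w1 (volume : Measure (Fin n → ℝ)) :=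
    hw1l.aestronglyMeasurable.aemeasurable
  set C0 : ℝ≥0∞ := apConst A 1 w0 with hC0def
  set C1 : ℝ≥0∞ := apConst A⁻¹ 1 w1 with hC1def
  have hC0top : C0 ≠ ⊤ := hmem0.ne
  have hC1top : C1 ≠ ⊤ := hmem1.ne
  set d : ℝ≥0∞ := ENNReal.ofReal |A.det| with hddef
  have hd0 : d ≠ 0 := by
    simp only [hddef, ne_eq, ENNReal.ofReal_eq_zero, not_le]
    exact abs_pos.mpr hA
  have hdtop : d ≠ ⊤ := ENNReal.ofReal_ne_top
  set K : ℝ := (∑ i, ∑ j, |A i j|) + 1 with hKdef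
  by_cases hnz : ∀ᵐ x ∂(volume : Measure (Fin n → ℝ)), w1 x ≠ 0
  · -- main case : w1 is a.e. nonzero
    set Cb : ℝ≥0∞ := C0 * (C1 * d⁻¹ * ENNReal.ofReal ((2 * K) ^ n)) ^ (p - 1) with hCbdef
    have hCbtop : Cb < ⊤ := by
      have h2 : (C1 * d⁻¹ * ENNReal.ofReal ((2 * K) ^ n)) ^ (p - 1) ≠ ⊤ :=
        ENNReal.rpow_ne_top_of_nonneg hp1.le
          (ENNReal.mul_ne_top (ENNReal.mul_ne_top hC1top (ENNReal.inv_ne_top.mpr hd0))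
            ENNReal.ofReal_ne_top)
      exact ENNReal.mul_lt_top (lt_top_iff_ne_top.mpr hC0top) (lt_top_iff_ne_top.mpr h2)
    have key : ∀ Q : Cube n, apE A p w Q ≤ Cb := by
      intro Q
      set V : ℝ≥0∞ := ENNReal.ofReal Q.vol with hVdef
      have hV0 : V ≠ 0 := by
        simp only [hVdef, ne_eq, ENNReal.ofReal_eq_zero, not_le]
        exact cube_vol_pos Q
      have hVtop : V ≠ ⊤ := ENNReal.ofReal_ne_top
      set Q' : Cube n := coverCube A Q with hQ'def
      set V' : ℝ≥0∞ := ENNReal.ofReal Q'.vol with hV'def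
      have hV'0 : V' ≠ 0 := by
        simp only [hV'def, ne_eq, ENNReal.ofReal_eq_zero, not_le]
        exact cube_vol_pos Q'
      have hV'top : V' ≠ ⊤ := ENNReal.ofReal_ne_top
      set S0 : ℝ≥0∞ := essSup (fun x => (ENNReal.ofReal (w0 x))⁻¹)
        (volume.restrict Q.set) with hS0def
      set S1 : ℝ≥0∞ := essSup (fun x => (ENNReal.ofReal (w1 x))⁻¹)
        (volume.restrict Q'.set) with hS1def
      set I0 : ℝ≥0∞ := ∫⁻ x in Q.set, ENNReal.ofReal (w0 (A.mulVec x)) with hI0def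
      set J1 : ℝ≥0∞ := ∫⁻ x in Q.set, ENNReal.ofReal (w1 x) with hJ1def
      set I1 : ℝ≥0∞ := ∫⁻ x in Q'.set, ENNReal.ofReal (w1 (A⁻¹.mulVec x)) with hI1def
      have E0 : (V⁻¹ * I0) * S0 ≤ C0 := by
        have h := le_iSup (apE A 1 w0) Q
        simpa [apE, hS0def, hVdef, hI0def, hC0def] using (show apE A 1 w0 Q ≤ apConst A 1 w0 from h)
      have E1 : (V'⁻¹ * I1) * S1 ≤ C1 := by
        have h := le_iSup (apE A⁻¹ 1 w1) Q'
        simpa [apE, hS1def, hV'def, hI1def, hC1def] using (show apE A⁻¹ 1 w1 Q' ≤ apConst A⁻¹ 1 w1 from h)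
      have hI1ge : d * J1 ≤ I1 :=
        key_cov hA (ENNReal.measurable_ofReal.comp_aemeasurable hw1m)
          (fun x hx => mem_coverCube hx)
      have hJ1pos : J1 ≠ 0 := by
        intro h0
        have h1 : ∀ᵐ x ∂(volume.restrict Q.set), ENNReal.ofReal (w1 x) = 0 :=
          (lintegral_eq_zero_iff'
            ((ENNReal.measurable_ofReal.comp_aemeasurable hw1m).restrict)).mp h0
        have h2 : ∀ᵐ x ∂(volume.restrict Q.set), False := by
          filter_upwards [h1, ae_restrict_of_ae hnz] with x hx1 hx2
          exact hx2 (le_antisymm (ENNReal.ofReal_eq_zero.mp hx1) (hw1 x))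
        have h3 : volume.restrict Q.set = 0 :=
          MeasureTheory.ae_eq_bot.mp (Filter.eventually_false_iff_eq_bot.mp h2)
        have h4 : (volume : Measure (Fin n → ℝ)) Q.set = 0 := by
          rw [← Measure.restrict_apply_univ, h3]; simp
        rw [cube_volume] at h4
        exact hV0 h4
      have hI1pos : I1 ≠ 0 := by
        intro h0
        rw [h0] at hI1ge
        exact mul_ne_zero hd0 hJ1pos (le_antisymm hI1ge (zero_le))
      have hS1top : S1 ≠ ⊤ := by
        intro htop
        rw [htop, ENNReal.mul_top
          (mul_ne_zero (ENNReal.inv_ne_zero.mpr hV'top) hI1pos)] at E1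
        exact hC1top (top_le_iff.mp E1)
      have hae1 : ∀ᵐ x ∂(volume.restrict Q.set),
          S1⁻¹ ≤ ENNReal.ofReal (w1 (A.mulVec x)) := by
        have h1 : ∀ᵐ y ∂(volume.restrict Q'.set),
            (ENNReal.ofReal (w1 y))⁻¹ ≤ S1 := ENNReal.ae_le_essSup _
        have h2 : ∀ᵐ y ∂(volume : Measure (Fin n → ℝ)),
            y ∈ Q'.set → (ENNReal.ofReal (w1 y))⁻¹ ≤ S1 :=
          (ae_restrict_iff' (cube_meas Q')).mp h1
        have h3 := (qmp_mulVec hA).ae h2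
        filter_upwards [ae_restrict_of_ae h3, ae_restrict_mem (cube_meas Q)] with x hx hxQ
        have h4 := hx (mem_coverCube hxQ)
        have h5 := ENNReal.inv_le_inv.mpr h4
        rwa [inv_inv] at h5
      have hae0 : ∀ᵐ x ∂(volume.restrict Q.set),
          (ENNReal.ofReal (w0 x))⁻¹ ≤ S0 := ENNReal.ae_le_essSup _
      have hapE : apE A p w Q =
          (V⁻¹ * ∫⁻ x in Q.set, ENNReal.ofReal (w (A.mulVec x))) *
          (V⁻¹ * ∫⁻ x in Q.set, ENNReal.ofReal (w x) ^ (1 - conj p)) ^ (p - 1) := by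
        rw [apE, if_neg hpne]
      by_cases hS0top : S0 = ⊤
      · -- first factor vanishes
        have hI00 : V⁻¹ * I0 = 0 := by
          by_contra hne
          rw [hS0top, ENNReal.mul_top hne] at E0
          exact hC0top (top_le_iff.mp E0)
        have hI0z : I0 = 0 := by
          rcases mul_eq_zero.mp hI00 with h | h
          · exact absurd h (ENNReal.inv_ne_zero.mpr hVtop)
          · exact h
        have hw0z : ∀ᵐ x ∂(volume.restrict Q.set),
            ENNReal.ofReal (w0 (A.mulVec x)) = 0 := by
          refine (lintegral_eq_zero_iff' ?_).mp hI0z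
          exact (ENNReal.measurable_ofReal.comp_aemeasurable
            (hw0m.comp_quasiMeasurePreserving (qmp_mulVec hA))).restrict
        have hF1 : (∫⁻ x in Q.set, ENNReal.ofReal (w (A.mulVec x))) = 0 := by
          have hz : ∀ᵐ x ∂(volume.restrict Q.set),
              ENNReal.ofReal (w (A.mulVec x)) = 0 := by
            filter_upwards [hw0z] with x hx
            have h0 : w0 (A.mulVec x) = 0 :=
              le_antisymm (ENNReal.ofReal_eq_zero.mp hx) (hw0 _)
            simp [hwdef, h0]
          rw [lintegral_congr_ae hz, lintegral_zero]
        rw [hapE, hF1, mul_zero, zero_mul]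
        exact zero_le
      · -- main estimate
        have hF1le : (∫⁻ x in Q.set, ENNReal.ofReal (w (A.mulVec x)))
            ≤ S1 ^ (p - 1) * I0 := by
          have hpt : ∀ᵐ x ∂(volume.restrict Q.set),
              ENNReal.ofReal (w (A.mulVec x)) ≤
                S1 ^ (p - 1) * ENNReal.ofReal (w0 (A.mulVec x)) := by
            filter_upwards [hae1] with x hx
            have h1 := pl1 he (hw0 (A.mulVec x)) hx
            have h2 : (S1⁻¹) ^ (1 - p) = S1 ^ (p - 1) := by
              rw [ENNReal.inv_rpow, ← ENNReal.rpow_neg]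
              norm_num
            rw [h2] at h1
            calc ENNReal.ofReal (w (A.mulVec x)) ≤
                ENNReal.ofReal (w0 (A.mulVec x)) * S1 ^ (p - 1) := h1
            _ = S1 ^ (p - 1) * ENNReal.ofReal (w0 (A.mulVec x)) := mul_comm _ _
          calc (∫⁻ x in Q.set, ENNReal.ofReal (w (A.mulVec x)))
              ≤ ∫⁻ x in Q.set, S1 ^ (p - 1) * ENNReal.ofReal (w0 (A.mulVec x)) :=
                lintegral_mono_ae hpt
          _ = S1 ^ (p - 1) * I0 :=
                lintegral_const_mul' _ _
                  (ENNReal.rpow_ne_top_of_nonneg hp1.le hS1top)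
        have hF2le : (∫⁻ x in Q.set, ENNReal.ofReal (w x) ^ (1 - conj p))
            ≤ S0 ^ (conj p - 1) * J1 := by
          have hpt : ∀ᵐ x ∂(volume.restrict Q.set),
              ENNReal.ofReal (w x) ^ (1 - conj p) ≤
                S0 ^ (conj p - 1) * ENNReal.ofReal (w1 x) := by
            filter_upwards [hae0, ae_restrict_of_ae hnz] with x hx hx1
            have hb : 0 < w1 x := lt_of_le_of_ne (hw1 x) (Ne.symm hx1)
            have h1 := pl2 hf hef (hw0 x) hb hx
            rwa [hnegf] at h1
          calc (∫⁻ x in Q.set, ENNReal.ofReal (w x) ^ (1 - conj p))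
              ≤ ∫⁻ x in Q.set, S0 ^ (conj p - 1) * ENNReal.ofReal (w1 x) :=
                lintegral_mono_ae hpt
          _ = S0 ^ (conj p - 1) * J1 :=
                lintegral_const_mul' _ _
                  (ENNReal.rpow_ne_top_of_nonneg (by linarith) hS0top)
        have e1 : V'⁻¹ * V' = 1 := ENNReal.inv_mul_cancel hV'0 hV'top
        have e2 : d * d⁻¹ = 1 := ENNReal.mul_inv_cancel hd0 hdtop
        have h1 : (V'⁻¹ * (d * J1)) * S1 ≤ C1 :=
          le_trans (mul_le_mul_left (mul_le_mul_right hI1ge _) _) E1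
        have hS1J : S1 * J1 ≤ C1 * (V' * d⁻¹) := by
          calc S1 * J1 = (V'⁻¹ * V') * ((d * d⁻¹) * (S1 * J1)) := by
                rw [e1, e2, one_mul, one_mul]
          _ = ((V'⁻¹ * (d * J1)) * S1) * (V' * d⁻¹) := by ring
          _ ≤ C1 * (V' * d⁻¹) := mul_le_mul_left h1 _
        have hVV' : V⁻¹ * V' = ENNReal.ofReal ((2 * K) ^ n) := by
          have hv : Q'.vol = (2 * K) ^ n * Q.vol := coverCube_vol A Q
          have hK0 : (0:ℝ) ≤ (2 * K) ^ n := by positivity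
          rw [hV'def, hv, ENNReal.ofReal_mul hK0, ← hVdef]
          rw [mul_comm (ENNReal.ofReal ((2 * K) ^ n)) V, ← mul_assoc,
            ENNReal.inv_mul_cancel hV0 hVtop, one_mul]
        have hfin : S1 * (V⁻¹ * J1) ≤ C1 * d⁻¹ * ENNReal.ofReal ((2 * K) ^ n) := by
          calc S1 * (V⁻¹ * J1) = V⁻¹ * (S1 * J1) := by ring
          _ ≤ V⁻¹ * (C1 * (V' * d⁻¹)) := mul_le_mul_right hS1J _
          _ = (C1 * d⁻¹) * (V⁻¹ * V') := by ring
          _ = C1 * d⁻¹ * ENNReal.ofReal ((2 * K) ^ n) := by rw [hVV']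
        rw [hapE]
        calc (V⁻¹ * ∫⁻ x in Q.set, ENNReal.ofReal (w (A.mulVec x))) *
            (V⁻¹ * ∫⁻ x in Q.set, ENNReal.ofReal (w x) ^ (1 - conj p)) ^ (p - 1)
            ≤ (V⁻¹ * (S1 ^ (p - 1) * I0)) *
              (V⁻¹ * (S0 ^ (conj p - 1) * J1)) ^ (p - 1) :=
              mul_le_mul' (mul_le_mul_right hF1le _)
                (ENNReal.rpow_le_rpow (mul_le_mul_right hF2le _) hp1.le)
        _ = ((V⁻¹ * I0) * S0) * (S1 * (V⁻¹ * J1)) ^ (p - 1) := by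
              have r1 : (V⁻¹ * (S0 ^ (conj p - 1) * J1)) ^ (p - 1) =
                  S0 * (V⁻¹ * J1) ^ (p - 1) := by
                rw [show V⁻¹ * (S0 ^ (conj p - 1) * J1) =
                    S0 ^ (conj p - 1) * (V⁻¹ * J1) by ring,
                  ENNReal.mul_rpow_of_nonneg _ _ hp1.le, ← ENNReal.rpow_mul, hqp,
                  ENNReal.rpow_one]
              have r2 : (S1 * (V⁻¹ * J1)) ^ (p - 1) =
                  S1 ^ (p - 1) * (V⁻¹ * J1) ^ (p - 1) :=
                ENNReal.mul_rpow_of_nonneg _ _ hp1.le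
              rw [r1, r2]; ring
        _ ≤ C0 * (C1 * d⁻¹ * ENNReal.ofReal ((2 * K) ^ n)) ^ (p - 1) :=
              mul_le_mul' E0 (ENNReal.rpow_le_rpow hfin hp1.le)
    exact lt_of_le_of_lt (iSup_le key) hCbtop
  · -- degenerate case : w1 vanishes on a set of positive measure, hence a.e.
    have hzero : ∀ᵐ x ∂(volume : Measure (Fin n → ℝ)), w1 x = 0 := by
      obtain ⟨Q₀, hQ₀⟩ : ∃ Q : Cube n,
          ¬ (∀ᵐ x ∂(volume.restrict Q.set), w1 x ≠ 0) := by
        by_contra hall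
        push_neg at hall
        apply hnz
        rw [ae_iff]
        set Zs : Set (Fin n → ℝ) := {x | ¬ w1 x ≠ 0} with hZdef
        have hcoverZ : ∀ x : Fin n → ℝ,
            x ∈ (Cube.mk (n := n) (fun i => (⌊x i⌋ : ℝ)) 1 one_pos).set := by
          intro x i
          exact ⟨Int.floor_le _, by
            have := Int.lt_floor_add_one (x i); simpa using this⟩
        have hsub : Zs ⊆ ⋃ g : Fin n → ℤ,
            Zs ∩ (Cube.mk (n := n) (fun i => (g i : ℝ)) 1 one_pos).set := by
          intro x hx
          exact Set.mem_iUnion.mpr ⟨fun i => ⌊x i⌋, hx, hcoverZ x⟩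
        have hle : volume Zs ≤ ∑' g : Fin n → ℤ,
            volume (Zs ∩ (Cube.mk (n := n) (fun i => (g i : ℝ)) 1 one_pos).set) :=
          le_trans (measure_mono hsub) (measure_iUnion_le _)
        have hz : ∀ g : Fin n → ℤ,
            volume (Zs ∩ (Cube.mk (n := n) (fun i => (g i : ℝ)) 1 one_pos).set) = 0 := by
          intro g
          rw [← Measure.restrict_apply' (cube_meas _)]
          exact ae_iff.mp (hall _)
        simp only [hz, tsum_zero, nonpos_iff_eq_zero] at hle
        exact hle
      have key0 := zero_prop hA hw1 hw1m hmem1 Q₀ hQ₀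
      -- a small cube inside the preimage of Q₀
      obtain ⟨P, hP⟩ : ∃ P : Cube n, ∀ x ∈ P.set, A.mulVec x ∈ Q₀.set := by
        set c : Fin n → ℝ := fun i => Q₀.corner i + Q₀.side / 2 with hcdef
        set p₀ : Fin n → ℝ := A⁻¹.mulVec c with hp₀def
        have hc : A.mulVec p₀ = c := by
          rw [hp₀def, Matrix.mulVec_mulVec,
            Matrix.mul_nonsing_inv _ (isUnit_iff_ne_zero.mpr hA), Matrix.one_mulVec]
        set U : Set (Fin n → ℝ) := A.mulVec ⁻¹'
          (Set.univ.pi fun i => Set.Ioo (Q₀.corner i) (Q₀.corner i + Q₀.side)) with hUdef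
        have hUopen : IsOpen U :=
          (isOpen_set_pi Set.finite_univ fun i _ => isOpen_Ioo).preimage
            (mulVec_continuous A)
        have hp₀U : p₀ ∈ U := by
          rw [hUdef, Set.mem_preimage, hc]
          intro i _
          have := Q₀.side_pos
          constructor <;> [skip; skip] <;> simp [hcdef] <;> linarith
        obtain ⟨δ, hδ, hball⟩ := Metric.isOpen_iff.mp hUopen p₀ hp₀U
        refine ⟨⟨fun i => p₀ i - δ / 2, δ / 2, by linarith⟩, ?_⟩
        intro x hx
        have hxU : x ∈ U := by
          apply hball
          rw [Metric.mem_ball, dist_pi_lt_iff hδ]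
          intro i
          have h1 := (hx i).1
          have h2 := (hx i).2
          rw [Real.dist_eq, abs_lt]
          constructor <;> simp only at h1 h2 <;> linarith
        intro i
        have := hxU i (Set.mem_univ i)
        exact ⟨this.1.le, this.2⟩
      have hPz : ∀ᵐ x ∂(volume : Measure (Fin n → ℝ)), x ∈ P.set → w1 x = 0 := by
        filter_upwards [key0] with x h hx
        exact h (hP x hx)
      set R : ℕ → Cube n := fun m =>
        ⟨fun i => P.corner i - (m + 1), P.side + 2 * (m + 1), by
          have := P.side_pos; positivity⟩ with hRdef
      have hPR : ∀ m : ℕ, P.set ⊆ (R m).set := by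
        intro m x hx i
        have h1 := (hx i).1
        have h2 := (hx i).2
        constructor
        · show P.corner i - (m + 1) ≤ x i
          have : (0:ℝ) ≤ (m:ℝ) + 1 := by positivity
          linarith
        · show x i < P.corner i - (m + 1) + (P.side + 2 * (m + 1))
          have : (0:ℝ) ≤ (m:ℝ) + 1 := by positivity
          linarith
      have hRnz : ∀ m : ℕ, ¬ (∀ᵐ x ∂(volume.restrict (R m).set), w1 x ≠ 0) := by
        intro m hae
        have h1 : volume ({x | ¬ w1 x ≠ 0} ∩ (R m).set) = 0 := by
          rw [← Measure.restrict_apply' (cube_meas _)]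
          exact ae_iff.mp hae
        have h2 : volume {x | x ∈ P.set ∧ w1 x ≠ 0} = 0 := by
          have h := ae_iff.mp hPz
          rw [show {a : Fin n → ℝ | ¬(a ∈ P.set → w1 a = 0)} =
            {x | x ∈ P.set ∧ w1 x ≠ 0} from by ext x; simp [Classical.not_imp]] at h
          exact h
        have hsub2 : P.set ⊆ ({x | ¬ w1 x ≠ 0} ∩ (R m).set) ∪
            {x | x ∈ P.set ∧ w1 x ≠ 0} := by
          intro x hx
          by_cases h : w1 x = 0
          · exact Or.inl ⟨by simpa using h, hPR m hx⟩
          · exact Or.inr ⟨hx, h⟩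
        have h3 : volume P.set ≤ 0 := by
          calc volume P.set ≤ volume (({x | ¬ w1 x ≠ 0} ∩ (R m).set) ∪
              {x | x ∈ P.set ∧ w1 x ≠ 0}) := measure_mono hsub2
          _ ≤ volume ({x | ¬ w1 x ≠ 0} ∩ (R m).set) +
              volume {x | x ∈ P.set ∧ w1 x ≠ 0} := measure_union_le _ _
          _ = 0 := by rw [h1, h2, add_zero]
        rw [cube_volume] at h3
        have := cube_vol_pos P
        simp only [nonpos_iff_eq_zero, ENNReal.ofReal_eq_zero] at h3
        linarith
      have hRz : ∀ m : ℕ, ∀ᵐ x ∂(volume : Measure (Fin n → ℝ)),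
          A.mulVec x ∈ (R m).set → w1 x = 0 :=
        fun m => zero_prop hA hw1 hw1m hmem1 (R m) (hRnz m)
      have hcov : ∀ x : Fin n → ℝ, ∃ m : ℕ, A.mulVec x ∈ (R m).set := by
        intro x
        set y : Fin n → ℝ := A.mulVec x with hydef
        set M : ℝ := ∑ i, |y i - P.corner i| with hMdef
        refine ⟨Nat.ceil M, fun i => ?_⟩
        have hiM : |y i - P.corner i| ≤ M :=
          Finset.single_le_sum (f := fun j => |y j - P.corner j|)
            (fun j _ => abs_nonneg _) (Finset.mem_univ i)
        have hM : M ≤ (Nat.ceil M : ℝ) := Nat.le_ceil M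
        obtain ⟨ha, hb⟩ := abs_le.mp hiM
        have hs := P.side_pos
        constructor
        · show P.corner i - ((Nat.ceil M : ℝ) + 1) ≤ y i
          linarith
        · show y i < P.corner i - ((Nat.ceil M : ℝ) + 1) + (P.side + 2 * ((Nat.ceil M : ℝ) + 1))
          linarith
      have hall : ∀ᵐ x ∂(volume : Measure (Fin n → ℝ)),
          ∀ m : ℕ, A.mulVec x ∈ (R m).set → w1 x = 0 := ae_all_iff.mpr hRz
      filter_upwards [hall] with x hx
      obtain ⟨m, hm⟩ := hcov x
      exact hx m hm
    have hzero' : ∀ᵐ x ∂(volume : Measure (Fin n → ℝ)), w1 (A.mulVec x) = 0 :=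
      (qmp_mulVec hA).ae hzero
    have hap : ∀ Q : Cube n, apE A p w Q = 0 := by
      intro Q
      have hF1 : (∫⁻ x in Q.set, ENNReal.ofReal (w (A.mulVec x))) = 0 := by
        have hz : ∀ᵐ x ∂(volume.restrict Q.set),
            ENNReal.ofReal (w (A.mulVec x)) = 0 := by
          refine ae_restrict_of_ae (hzero'.mono fun x hx => ?_)
          simp [hwdef, hx, Real.zero_rpow (ne_of_lt he)]
        rw [lintegral_congr_ae hz, lintegral_zero]
      rw [apE, if_neg hpne, hF1, mul_zero, zero_mul]
    have : apConst A p w ≤ 0 := iSup_le fun Q => le_of_eq (hap Q)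
    exact lt_of_le_of_lt this (by simp)

end Paper
end
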